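/- Let V₁,…,V_N be independent centered Gaussian random variables and let P be a polynomial function of (V₁,…,V_N) of total degree d. Let s₁,…,s_N be nonnegative integers and δ₁,…,δ_N ∈ {0,1}. Then E[∏ᵢ Vᵢ^{2sᵢ+δᵢ} · P(V)] = Q(s₁,…,s_N) · ∏ᵢ (2sᵢ + 2δᵢ - 1)!! · E[Vᵢ²]^{sᵢ}, where Q is a polynomial in (s₁,…,s_N) of total degree at most (d - Σᵢ δᵢ)/2. -/

import Mathlib

open MeasureTheory ProbabilityTheory

section GaussAuxSection
open MeasureTheory ProbabilityTheory Real

namespace GaussAux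

lemma dfac_succ (a : ℕ) :
    Nat.doubleFactorial (2 * (a + 1) - 1) = (2 * a + 1) * Nat.doubleFactorial (2 * a - 1) := by
  cases a with
  | zero => decide
  | succ b =>
    have h1 : 2 * (b + 1 + 1) - 1 = (2 * (b + 1) - 1) + 2 := by omega
    have h2 : (2 * (b + 1) - 1) + 2 = 2 * (b + 1) + 1 := by omega
    rw [h1, Nat.doubleFactorial_add_two, h2]

lemma dfac_prod (a t : ℕ) :
    ((Nat.doubleFactorial (2 * (a + t) - 1) : ℝ)) =
      (∏ j ∈ Finset.range t, (2 * (a : ℝ) + 2 * (j : ℝ) + 1)) *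
        (Nat.doubleFactorial (2 * a - 1) : ℝ) := by
  induction t with
  | zero => simp
  | succ t ih =>
    have h : a + (t + 1) = (a + t) + 1 := by omega
    rw [h, dfac_succ, Finset.prod_range_succ]
    push_cast
    rw [ih]
    ring

lemma integrable_pow_exp {b : ℝ} (hb : 0 < b) (n : ℕ) :
    Integrable (fun x : ℝ => x ^ n * Real.exp (-b * x ^ 2)) := by
  have h : (-1 : ℝ) < (n : ℝ) :=
    lt_of_lt_of_le (by norm_num) (Nat.cast_nonneg n)
  simpa [Real.rpow_natCast] using integrable_rpow_mul_exp_neg_mul_sq hb h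

lemma moment_rec {b : ℝ} (hb : 0 < b) (n : ℕ) :
    ∫ x : ℝ, x ^ (n + 2) * Real.exp (-b * x ^ 2)
      = (((n : ℝ) + 1) / (2 * b)) * ∫ x : ℝ, x ^ n * Real.exp (-b * x ^ 2) := by
  have hderiv : ∀ x : ℝ, HasDerivAt (fun y : ℝ => y ^ (n + 1) * Real.exp (-b * y ^ 2))
      (((n : ℝ) + 1) * (x ^ n * Real.exp (-b * x ^ 2))
        - (2 * b) * (x ^ (n + 2) * Real.exp (-b * x ^ 2))) x := by
    intro x
    have h1 : HasDerivAt (fun y : ℝ => y ^ (n + 1)) ((↑(n + 1) : ℝ) * x ^ n) x := by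
      simpa using hasDerivAt_pow (n + 1) x
    have h3 : HasDerivAt (fun y : ℝ => -b * y ^ 2) (-b * (2 * x ^ 1)) x := by
      simpa using (hasDerivAt_pow 2 x).const_mul (-b)
    have h2 : HasDerivAt (fun y : ℝ => Real.exp (-b * y ^ 2))
        (Real.exp (-b * x ^ 2) * (-b * (2 * x ^ 1))) x := h3.exp
    have := h1.fun_mul h2
    refine this.congr_deriv ?_
    push_cast
    ring
  have hzero := integral_eq_zero_of_hasDerivAt_of_integrable hderiv
    ((((integrable_pow_exp hb n)).const_mul _).sub
      (((integrable_pow_exp hb (n + 2))).const_mul _))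
    (integrable_pow_exp hb (n + 1))
  rw [integral_sub ((integrable_pow_exp hb n).const_mul _)
      ((integrable_pow_exp hb (n + 2)).const_mul _),
    integral_const_mul, integral_const_mul] at hzero
  have hb' : (2 : ℝ) * b ≠ 0 := by positivity
  rw [div_mul_eq_mul_div, eq_div_iff hb']
  linear_combination -hzero

lemma pdf_eq (v : NNReal) (hv : v ≠ 0) (x : ℝ) :
    gaussianPDFReal 0 v x
      = (Real.sqrt (2 * Real.pi * v))⁻¹ * Real.exp (-(2 * (v : ℝ))⁻¹ * x ^ 2) := by
  rw [gaussianPDFReal]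
  congr 1
  congr 1
  ring

lemma moment_eq (v : NNReal) (hv : v ≠ 0) (n : ℕ) :
    ∫ x, x ^ n ∂(gaussianReal 0 v)
      = (Real.sqrt (2 * Real.pi * v))⁻¹
        * ∫ x : ℝ, x ^ n * Real.exp (-(2 * (v : ℝ))⁻¹ * x ^ 2) := by
  rw [gaussianReal_of_var_ne_zero _ hv]
  have hmeas : Measurable (fun x : ℝ => Real.toNNReal (gaussianPDFReal 0 v x)) :=
    (measurable_gaussianPDFReal 0 v).real_toNNReal
  have hpdf : gaussianPDF 0 v = fun x => ((Real.toNNReal (gaussianPDFReal 0 v x) : NNReal) : ENNReal) := by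
    funext x; rfl
  rw [hpdf, integral_withDensity_eq_integral_smul hmeas, ← integral_const_mul]
  congr 1
  funext x
  rw [NNReal.smul_def, Real.coe_toNNReal _ (gaussianPDFReal_nonneg 0 v x), pdf_eq v hv, smul_eq_mul]
  ring

lemma gaussian_moment_even (v : NNReal) (k : ℕ) :
    ∫ x, x ^ (2 * k) ∂(gaussianReal 0 v)
      = (Nat.doubleFactorial (2 * k - 1) : ℝ) * (v : ℝ) ^ k := by
  rcases eq_or_ne v 0 with hv | hv
  · subst hv
    rw [gaussianReal_zero_var, integral_dirac]
    cases k with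
    | zero => simp [Nat.doubleFactorial]
    | succ k =>
      rw [zero_pow (by omega)]
      rw [show ((0 : NNReal) : ℝ) = 0 from rfl, zero_pow (by omega), mul_zero]
  · have hv' : 0 < (v : ℝ) := by
      have := pos_iff_ne_zero.mpr hv
      exact_mod_cast this
    have hb : 0 < ((2 * (v : ℝ))⁻¹ : ℝ) := by positivity
    have h2b : (2 : ℝ) * (2 * (v : ℝ))⁻¹ = (v : ℝ)⁻¹ := by
      field_simp
    induction k with
    | zero =>
      simp [Nat.doubleFactorial]
    | succ k ih =>
      conv_lhs => rw [show 2 * (k + 1) = (2 * k) + 2 from by ring]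
      rw [moment_eq v hv, moment_rec hb, mul_left_comm, ← moment_eq v hv, ih, h2b,
        div_eq_mul_inv, inv_inv, dfac_succ]
      push_cast
      ring

lemma gaussian_moment_odd (v : NNReal) (k : ℕ) :
    ∫ x, x ^ (2 * k + 1) ∂(gaussianReal 0 v) = 0 := by
  have hmap : (gaussianReal 0 v).map (fun x => (-1 : ℝ) * x) = gaussianReal 0 v := by
    have h1 : (⟨(-1 : ℝ) ^ 2, sq_nonneg _⟩ : NNReal) = 1 := by
      ext; norm_num
    have h2 := gaussianReal_map_const_mul (μ := 0) (v := v) (-1 : ℝ)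
    rw [mul_zero] at h2
    convert h2 using 2
    ext; simp
  have h1 : ∫ x, x ^ (2 * k + 1) ∂(gaussianReal 0 v)
      = ∫ x, ((-1 : ℝ) * x) ^ (2 * k + 1) ∂(gaussianReal 0 v) := by
    conv_lhs => rw [← hmap]
    rw [integral_map (by fun_prop) (by fun_prop)]
  have h2 : ∀ x : ℝ, ((-1 : ℝ) * x) ^ (2 * k + 1) = -(x ^ (2 * k + 1)) := by
    intro x
    rw [neg_one_mul]
    exact Odd.neg_pow ⟨k, by omega⟩ x
  simp_rw [h2, integral_neg] at h1
  linarith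

lemma integrable_pow_gaussianReal (v : NNReal) (n : ℕ) :
    Integrable (fun x : ℝ => x ^ n) (gaussianReal 0 v) := by
  rcases eq_or_ne v 0 with hv | hv
  · subst hv
    rw [gaussianReal_zero_var]
    refine ⟨(measurable_id.pow_const n).aestronglyMeasurable, ?_⟩
    simp only [HasFiniteIntegral, lintegral_dirac]
    exact ENNReal.coe_lt_top
  · rw [gaussianReal_of_var_ne_zero _ hv]
    have hv' : 0 < (v : ℝ) := by
      have := pos_iff_ne_zero.mpr hv
      exact_mod_cast this
    have hb : 0 < ((2 * (v : ℝ))⁻¹ : ℝ) := by positivity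
    rw [integrable_withDensity_iff (measurable_gaussianPDF 0 v)
      (ae_of_all _ fun x => ENNReal.ofReal_lt_top)]
    have heq : (fun x : ℝ => x ^ n * (gaussianPDF 0 v x).toReal)
        = fun x => (Real.sqrt (2 * Real.pi * v))⁻¹
            * (x ^ n * Real.exp (-(2 * (v : ℝ))⁻¹ * x ^ 2)) := by
      funext x
      rw [gaussianPDF, ENNReal.toReal_ofReal (gaussianPDFReal_nonneg 0 v x), pdf_eq v hv]
      ring
    rw [heq]
    exact (integrable_pow_exp hb n).const_mul _

lemma integral_prod_indep {Ω : Type*} [MeasurableSpace Ω] {μ : Measure Ω} [IsProbabilityMeasure μ]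
    {ι : Type*} {W : ι → Ω → ℝ} (hmeas : ∀ i, Measurable (W i))
    (hindep : iIndepFun W μ) (hint : ∀ i, Integrable (W i) μ)
    (s : Finset ι) :
    Integrable (fun ω => ∏ i ∈ s, W i ω) μ ∧
      ∫ ω, ∏ i ∈ s, W i ω ∂μ = ∏ i ∈ s, ∫ ω, W i ω ∂μ := by
  classical
  induction s using Finset.cons_induction with
  | empty => simp
  | cons i s hi ih =>
    have hprod : IndepFun (∏ j ∈ s, W j) (W i) μ :=
      hindep.indepFun_finsetProd_of_notMem hmeas hi
    have hfun : (∏ j ∈ s, W j) = fun ω => ∏ j ∈ s, W j ω := by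
      funext ω; simp [Finset.prod_apply]
    have hint1 : Integrable ((∏ j ∈ s, W j) * W i) μ :=
      hprod.integrable_mul (by rw [hfun]; exact ih.1) (hint i)
    have hmul : ((∏ j ∈ s, W j) * W i) = fun ω => ∏ j ∈ Finset.cons i s hi, W j ω := by
      funext ω
      simp only [Pi.mul_apply, Finset.prod_cons, Finset.prod_apply]
      ring
    constructor
    · rw [← hmul]; exact hint1
    · rw [← hmul, hprod.integral_mul_eq_mul_integral (by rw [hfun]; exact ih.1.aestronglyMeasurable) (hint i).aestronglyMeasurable,
        hfun, ih.2, Finset.prod_cons]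
      ring

end GaussAux

end GaussAuxSection

/-- Averages of powers of independent centered Gaussians times a polynomial:
`E[Π_i V_i^(2s_i+δ_i) · P(V)] = Q(s) · Π_i (2s_i + 2δ_i - 1)‼ · E[V_i²]^(s_i)`,
where `Q` is a polynomial in the `s_i` of total degree at most `(d - Σ_i δ_i)/2`,
`d` the total degree of `P`. -/
theorem gaussian_average_power_polynomial
    {Ω : Type*} [MeasurableSpace Ω] (μ : Measure Ω) [IsProbabilityMeasure μ]
    (N : ℕ) (V : Fin N → Ω → ℝ) (hVmeas : ∀ i, Measurable (V i))
    (hindep : iIndepFun V μ)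
    (v : Fin N → NNReal) (hlaw : ∀ i, Measure.map (V i) μ = gaussianReal 0 (v i))
    (P : MvPolynomial (Fin N) ℝ) (d : ℕ) (hdeg : P.totalDegree = d)
    (δ : Fin N → ℕ) (hδ : ∀ i, δ i ≤ 1) :
    ∃ Q : MvPolynomial (Fin N) ℝ,
      2 * Q.totalDegree ≤ d - (∑ i, δ i) ∧
      ∀ s : Fin N → ℕ,
        (∫ ω, (∏ i, V i ω ^ (2 * s i + δ i)) *
            MvPolynomial.eval (fun i => V i ω) P ∂μ)
          = MvPolynomial.eval (fun i => (s i : ℝ)) Q *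
            ∏ i, (Nat.doubleFactorial (2 * s i + 2 * δ i - 1) : ℝ) *
              (∫ ω, V i ω ^ 2 ∂μ) ^ (s i) := by
  classical
  have hv2 : ∀ i, ∫ ω, V i ω ^ 2 ∂μ = ((v i : NNReal) : ℝ) := by
    intro i
    have h := GaussAux.gaussian_moment_even (v i) 1
    rw [← hlaw i, integral_map (hVmeas i).aemeasurable (by fun_prop)] at h
    simpa [Nat.doubleFactorial] using h
  have hmom : ∀ (i : Fin N) (n : ℕ),
      ∫ ω, V i ω ^ n ∂μ = ∫ x, x ^ n ∂(gaussianReal 0 (v i)) := by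
    intro i n
    rw [← hlaw i, integral_map (hVmeas i).aemeasurable (by fun_prop)]
  have hWint : ∀ (e : Fin N → ℕ) (i : Fin N), Integrable (fun ω => V i ω ^ e i) μ := by
    intro e i
    have h := GaussAux.integrable_pow_gaussianReal (v i) (e i)
    rw [← hlaw i] at h
    have := (integrable_map_measure (by fun_prop) (hVmeas i).aemeasurable).mp h
    simpa [Function.comp_def] using this
  have hWind : ∀ (e : Fin N → ℕ),
      iIndepFun (fun i ω => V i ω ^ e i) μ :=
    fun e => hindep.comp (fun i x => x ^ e i) (fun i => measurable_id.pow_const (e i))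
  have hprod := fun (e : Fin N → ℕ) => GaussAux.integral_prod_indep
    (W := fun i ω => V i ω ^ e i)
    (fun i => (hVmeas i).pow_const (e i)) (hWind e) (hWint e) Finset.univ
  refine ⟨∑ m ∈ P.support.filter (fun (m : Fin N →₀ ℕ) => ∀ i, Even (δ i + m i)),
      MvPolynomial.C (P.coeff m) *
        ∏ i, (MvPolynomial.C (((v i : NNReal) : ℝ) ^ (δ i + (m i - δ i) / 2)) *
          ∏ j ∈ Finset.range ((m i - δ i) / 2),
            (MvPolynomial.C 2 * MvPolynomial.X i
              + MvPolynomial.C (2 * (δ i : ℝ) + 2 * (j : ℝ) + 1))), ?_, ?_⟩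
  · -- degree bound
    have hlin : ∀ (c : ℝ) (i : Fin N),
        (MvPolynomial.C 2 * MvPolynomial.X i + MvPolynomial.C c :
          MvPolynomial (Fin N) ℝ).totalDegree ≤ 1 := by
      intro c i
      refine le_trans (MvPolynomial.totalDegree_add _ _) (max_le ?_ (by simp))
      refine le_trans (MvPolynomial.totalDegree_mul _ _) ?_
      simp [MvPolynomial.totalDegree_X, MvPolynomial.totalDegree_C]
    have h1 : (∑ m ∈ P.support.filter (fun (m : Fin N →₀ ℕ) => ∀ i, Even (δ i + m i)),
        MvPolynomial.C (P.coeff m) *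
          ∏ i, (MvPolynomial.C (((v i : NNReal) : ℝ) ^ (δ i + (m i - δ i) / 2)) *
            ∏ j ∈ Finset.range ((m i - δ i) / 2),
              (MvPolynomial.C 2 * MvPolynomial.X i
                + MvPolynomial.C (2 * (δ i : ℝ) + 2 * (j : ℝ) + 1)))).totalDegree
        ≤ (d - ∑ i, δ i) / 2 := by
      apply MvPolynomial.totalDegree_finsetSum_le
      intro m hm
      rw [Finset.mem_filter] at hm
      obtain ⟨hmP, hmg⟩ := hm
      have hmi : ∀ i, m i = δ i + 2 * ((m i - δ i) / 2) := by
        intro i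
        obtain ⟨c, hc⟩ := hmg i
        have := hδ i
        omega
      have hsum : ∑ i, m i ≤ d := by
        have h2 := MvPolynomial.le_totalDegree hmP
        rw [hdeg] at h2
        refine le_trans (le_of_eq ?_) h2
        exact (Finsupp.sum_fintype m (fun _ e => e) (fun _ => rfl)).symm
      have hts : 2 * (∑ i, (m i - δ i) / 2) + ∑ i, δ i ≤ d := by
        have heq : ∑ i, m i = ∑ i, (δ i + 2 * ((m i - δ i) / 2)) :=
          Finset.sum_congr rfl fun i _ => hmi i
        rw [Finset.sum_add_distrib, ← Finset.mul_sum] at heq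
        omega
      have hdegm : (MvPolynomial.C (P.coeff m) *
          ∏ i, (MvPolynomial.C (((v i : NNReal) : ℝ) ^ (δ i + (m i - δ i) / 2)) *
            ∏ j ∈ Finset.range ((m i - δ i) / 2),
              (MvPolynomial.C 2 * MvPolynomial.X i
                + MvPolynomial.C (2 * (δ i : ℝ) + 2 * (j : ℝ) + 1)))).totalDegree
          ≤ ∑ i, (m i - δ i) / 2 := by
        refine le_trans (MvPolynomial.totalDegree_mul _ _) ?_
        rw [MvPolynomial.totalDegree_C, zero_add]
        refine le_trans (MvPolynomial.totalDegree_finset_prod _ _)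
          (Finset.sum_le_sum fun i _ => ?_)
        refine le_trans (MvPolynomial.totalDegree_mul _ _) ?_
        rw [MvPolynomial.totalDegree_C, zero_add]
        refine le_trans (MvPolynomial.totalDegree_finset_prod _ _) ?_
        refine le_trans (Finset.sum_le_sum (fun j _ => hlin (2 * (δ i : ℝ) + 2 * (j : ℝ) + 1) i))
          (by simp)
      exact le_trans hdegm (by omega)
    omega
  · -- evaluation identity
    intro s
    have hrw : ∀ ω, (∏ i, V i ω ^ (2 * s i + δ i)) * MvPolynomial.eval (fun i => V i ω) P
        = ∑ m ∈ P.support, P.coeff m * ∏ i, V i ω ^ (2 * s i + δ i + m i) := by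
      intro ω
      rw [MvPolynomial.eval_eq', Finset.mul_sum]
      refine Finset.sum_congr rfl fun m _ => ?_
      rw [mul_left_comm]
      congr 1
      rw [← Finset.prod_mul_distrib]
      exact Finset.prod_congr rfl fun i _ => (pow_add _ _ _).symm
    calc ∫ ω, (∏ i, V i ω ^ (2 * s i + δ i)) * MvPolynomial.eval (fun i => V i ω) P ∂μ
        = ∫ ω, ∑ m ∈ P.support, P.coeff m * ∏ i, V i ω ^ (2 * s i + δ i + m i) ∂μ :=
          integral_congr_ae (ae_of_all _ hrw)
      _ = ∑ m ∈ P.support, ∫ ω, P.coeff m * ∏ i, V i ω ^ (2 * s i + δ i + m i) ∂μ :=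
          integral_finset_sum _ fun m _ =>
            ((hprod (fun i => 2 * s i + δ i + m i)).1).const_mul _
      _ = ∑ m ∈ P.support, P.coeff m * ∏ i, ∫ ω, V i ω ^ (2 * s i + δ i + m i) ∂μ := by
          refine Finset.sum_congr rfl fun m _ => ?_
          rw [integral_const_mul, (hprod (fun i => 2 * s i + δ i + m i)).2]
      _ = ∑ m ∈ P.support.filter (fun (m : Fin N →₀ ℕ) => ∀ i, Even (δ i + m i)),
            P.coeff m * ∏ i, ∫ ω, V i ω ^ (2 * s i + δ i + m i) ∂μ := by
          rw [← Finset.sum_filter_add_sum_filter_not P.support (fun (m : Fin N →₀ ℕ) => ∀ i, Even (δ i + m i))]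
          have hz : ∀ m ∈ P.support.filter (fun (m : Fin N →₀ ℕ) => ¬ ∀ i, Even (δ i + m i)),
              P.coeff m * ∏ i, ∫ ω, V i ω ^ (2 * s i + δ i + m i) ∂μ = 0 := by
            intro m hm
            rw [Finset.mem_filter] at hm
            obtain ⟨-, hng⟩ := hm
            push_neg at hng
            obtain ⟨i, hi⟩ := hng
            have hodd : ∃ c, 2 * s i + δ i + m i = 2 * c + 1 := by
              rcases Nat.even_or_odd (δ i + m i) with he | ho
              · exact absurd he hi
              · obtain ⟨c, hc⟩ := ho
                exact ⟨s i + c, by omega⟩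
            obtain ⟨c, hc⟩ := hodd
            have hzero : ∫ ω, V i ω ^ (2 * s i + δ i + m i) ∂μ = 0 := by
              rw [hc, hmom, GaussAux.gaussian_moment_odd]
            rw [Finset.prod_eq_zero (Finset.mem_univ i) hzero, mul_zero]
          rw [Finset.sum_eq_zero hz, add_zero]
      _ = ∑ m ∈ P.support.filter (fun (m : Fin N →₀ ℕ) => ∀ i, Even (δ i + m i)),
            (P.coeff m * ∏ i, (((v i : NNReal) : ℝ) ^ (δ i + (m i - δ i) / 2) *
              ∏ j ∈ Finset.range ((m i - δ i) / 2),
                (2 * (s i : ℝ) + 2 * (δ i : ℝ) + 2 * (j : ℝ) + 1)))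
            * ∏ i, ((Nat.doubleFactorial (2 * s i + 2 * δ i - 1) : ℝ)
                * (∫ ω, V i ω ^ 2 ∂μ) ^ (s i)) := by
          refine Finset.sum_congr rfl fun m hm => ?_
          rw [Finset.mem_filter] at hm
          obtain ⟨hmP, hmg⟩ := hm
          rw [mul_assoc, ← Finset.prod_mul_distrib]
          congr 1
          refine Finset.prod_congr rfl fun i _ => ?_
          obtain ⟨c, hc⟩ := hmg i
          have hd1 : δ i ≤ 1 := hδ i
          have hk : 2 * s i + δ i + m i = 2 * ((s i + δ i) + (m i - δ i) / 2) := by omega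
          have hpe : (∏ j ∈ Finset.range ((m i - δ i) / 2),
                (2 * ((s i + δ i : ℕ) : ℝ) + 2 * (j : ℝ) + 1))
              = ∏ j ∈ Finset.range ((m i - δ i) / 2),
                (2 * (s i : ℝ) + 2 * (δ i : ℝ) + 2 * (j : ℝ) + 1) :=
            Finset.prod_congr rfl fun j _ => by push_cast; ring
          have harg : 2 * (s i + δ i) - 1 = 2 * s i + 2 * δ i - 1 := by omega
          rw [hk, hmom, GaussAux.gaussian_moment_even, GaussAux.dfac_prod, hpe, harg, hv2]
          ring
      _ = MvPolynomial.eval (fun i => (s i : ℝ))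
            (∑ m ∈ P.support.filter (fun (m : Fin N →₀ ℕ) => ∀ i, Even (δ i + m i)),
              MvPolynomial.C (P.coeff m) *
                ∏ i, (MvPolynomial.C (((v i : NNReal) : ℝ) ^ (δ i + (m i - δ i) / 2)) *
                  ∏ j ∈ Finset.range ((m i - δ i) / 2),
                    (MvPolynomial.C 2 * MvPolynomial.X i
                      + MvPolynomial.C (2 * (δ i : ℝ) + 2 * (j : ℝ) + 1)))) *
            ∏ i, ((Nat.doubleFactorial (2 * s i + 2 * δ i - 1) : ℝ)
                * (∫ ω, V i ω ^ 2 ∂μ) ^ (s i)) := by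
          rw [← Finset.sum_mul]
          congr 1
          simp only [map_sum, map_mul, map_add, map_prod, MvPolynomial.eval_C, MvPolynomial.eval_X]
          refine Finset.sum_congr rfl fun m _ => ?_
          congr 1
          refine Finset.prod_congr rfl fun i _ => ?_
          congr 1
          exact Finset.prod_congr rfl fun j _ => by ring
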